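/- arXiv:1708.05541 — 4 statements merged into one kernel-verified Lean document; each statement's English description precedes it below -/
import Mathlib

section
/- For every positive integer h, h / gcd(h, 6) = gcd(h, 2·C(h,3) + C(h,2)), where C(n,k) denotes the binomial coefficient. (This shows that Braun's formula h/gcd(h, lcm(1,2,3)) and Douglas's formula gcd(h, 2·C(h,3) + C(h,2)) for the order c(Sp(2), h) of the torsion in twisted K-theory of Sp(2) coincide.) -/
lemma six_mul_formula (h : ℕ) :
    6 * (2 * h.choose 3 + h.choose 2) = h * ((h - 1) * (2 * h - 1)) := by
  induction h with
  | zero => simp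
  | succ n ih =>
    rw [Nat.choose_succ_succ n 2, Nat.choose_succ_succ n 1, Nat.choose_one_right]
    have h2 : 2 * n.choose 2 = n * (n - 1) := by
      rw [Nat.choose_two_right, Nat.mul_div_cancel' (Nat.even_mul_pred_self n).two_dvd]
    cases n with
    | zero => simp
    | succ m =>
      simp only [Nat.succ_sub_one] at *
      have e1 : 2 * (m + 1) - 1 = 2 * m + 1 := by omega
      have e2 : 2 * (m + 1 + 1) - 1 = 2 * m + 3 := by omega
      rw [e1] at ih
      rw [e2]
      nlinarith [ih, h2]

lemma key_gcd (h : ℕ) (hpos : 0 < h) :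
    Nat.gcd h 6 * Nat.gcd 6 ((h - 1) * (2 * h - 1)) = 6 := by
  have e1 : Nat.gcd h 6 = Nat.gcd (h % 6) 6 := by
    rw [Nat.gcd_comm, Nat.gcd_rec]
  have e2 : Nat.gcd 6 ((h - 1) * (2 * h - 1)) =
      Nat.gcd ((h - 1) % 6 * ((2 * h - 1) % 6) % 6) 6 := by
    rw [Nat.gcd_rec, Nat.mul_mod]
  rw [e1, e2]
  have h6 : h % 6 < 6 := Nat.mod_lt _ (by norm_num)
  interval_cases hm : h % 6 <;>
  · have b1 : (h - 1) % 6 = (h % 6 + 5) % 6 := by omega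
    have b2 : (2 * h - 1) % 6 = (2 * (h % 6) + 5) % 6 := by omega
    rw [hm] at b1 b2
    norm_num at b1 b2
    rw [b1, b2]
    decide

/-- Braun's formula `h / gcd(h, 6)` and Douglas's formula
`gcd(h, 2·C(h,3) + C(h,2))` for `c(Sp(2), h)` coincide. -/
theorem braun_douglas_Sp2 (h : ℕ) (hpos : 0 < h) :
    h / Nat.gcd h 6 = Nat.gcd h (2 * h.choose 3 + h.choose 2) := by
  set N := 2 * h.choose 3 + h.choose 2 with hN
  have hX : 6 * N = h * ((h - 1) * (2 * h - 1)) := six_mul_formula h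
  have hg : 6 * Nat.gcd h N = h * Nat.gcd 6 ((h - 1) * (2 * h - 1)) := by
    rw [← Nat.gcd_mul_left 6 h N, hX, mul_comm 6 h, Nat.gcd_mul_left]
  have gdvd : Nat.gcd h 6 ∣ h := Nat.gcd_dvd_left h 6
  have gpos : 0 < Nat.gcd h 6 := Nat.gcd_pos_of_pos_left 6 hpos
  rw [Nat.div_eq_iff_eq_mul_left gpos gdvd]
  have k := key_gcd h hpos
  have : 6 * h = 6 * (Nat.gcd h N * Nat.gcd h 6) := by
    nlinarith [hg, k]
  exact Nat.eq_of_mul_eq_mul_left (by norm_num) this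
end

section
/- If h is a positive integer divisible by 3, then ν_3(2·C(h,3) + C(h,2)) = ν_3(h) − 1. -/
/-- If `h` is a positive integer divisible by `3`, then
`ν_3(2·C(h,3) + C(h,2)) = ν_3(h) − 1`. -/
theorem val3_douglas_Sp2 (h : ℕ) (hpos : 0 < h) (hdvd : 3 ∣ h) :
    padicValNat 3 (2 * h.choose 3 + h.choose 2) = padicValNat 3 h - 1 := by
  have h3 : 3 ≤ h := Nat.le_of_dvd hpos hdvd
  set N := 2 * h.choose 3 + h.choose 2 with hNdef
  have hN : 6 * N = h * (h - 1) * (2 * h - 1) := by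
    have d3 : h.descFactorial 3 = 6 * h.choose 3 :=
      Nat.descFactorial_eq_factorial_mul_choose h 3
    have d2 : h.descFactorial 2 = 2 * h.choose 2 :=
      Nat.descFactorial_eq_factorial_mul_choose h 2
    obtain ⟨m, rfl⟩ := Nat.exists_eq_add_of_le h3
    simp [Nat.descFactorial] at d3 d2
    have e0 : 3 + m - 2 = m + 1 := by omega
    rw [e0] at d3
    have e1 : 3 + m - 1 = m + 2 := by omega
    have e2 : 2 * (3 + m) - 1 = 2 * m + 5 := by omega
    rw [hNdef, e1, e2]
    nlinarith [d3, d2]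
  have hNpos : 0 < N := by
    have : 0 < h.choose 2 := Nat.choose_pos (by omega)
    omega
  have hp : Fact (Nat.Prime 3) := ⟨by norm_num⟩
  have hv6 : padicValNat 3 (6 * N) = 1 + padicValNat 3 N := by
    rw [padicValNat.mul (by norm_num) (by omega)]
    have : (6:ℕ) = 2 * 3 := by norm_num
    rw [this, padicValNat.mul (by norm_num) (by norm_num),
        padicValNat.eq_zero_of_not_dvd (by norm_num), padicValNat.self (by norm_num)]
  have hvL : padicValNat 3 (h * (h - 1) * (2 * h - 1)) = padicValNat 3 h := by
    rw [padicValNat.mul (Nat.mul_ne_zero (by omega) (by omega)) (by omega),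
        padicValNat.mul (by omega) (by omega)]
    have h1 : padicValNat 3 (h - 1) = 0 :=
      padicValNat.eq_zero_of_not_dvd (by omega)
    have h2 : padicValNat 3 (2 * h - 1) = 0 :=
      padicValNat.eq_zero_of_not_dvd (by omega)
    omega
  have hge : 1 ≤ padicValNat 3 h := one_le_padicValNat_of_dvd (by omega) hdvd
  have := hN ▸ hv6
  omega
end

section
/- For every positive integer h, h / gcd(h, 60) = gcd(h, C(h+2,2) − 1, (h+1)(h+2)(2h+3)(3h+4)(3h+5)/120 − 1), where the displayed quotient by 120 is an exact integer division. (This shows that Braun's formula h/gcd(h,60) and Douglas's formula gcd(h, C(h+2,2) − 1, (h+1)(h+2)(2h+3)(3h+4)(3h+5)/120 − 1) for the order c(G_2, h) of the torsion in twisted K-theory of G_2 coincide.) -/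
lemma g2_gcd_expand (x y : ℕ) :
    Nat.gcd 120 (Nat.gcd x y) = Nat.gcd (Nat.gcd 120 x) (Nat.gcd 120 y) := by
  apply Nat.dvd_antisymm
  · apply Nat.dvd_gcd
    · exact Nat.dvd_gcd (Nat.gcd_dvd_left _ _)
        ((Nat.gcd_dvd_right _ _).trans (Nat.gcd_dvd_left _ _))
    · exact Nat.dvd_gcd (Nat.gcd_dvd_left _ _)
        ((Nat.gcd_dvd_right _ _).trans (Nat.gcd_dvd_right _ _))
  · apply Nat.dvd_gcd
    · exact (Nat.gcd_dvd_left _ _).trans (Nat.gcd_dvd_left _ _)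
    · exact Nat.dvd_gcd ((Nat.gcd_dvd_left _ _).trans (Nat.gcd_dvd_right _ _))
        ((Nat.gcd_dvd_right _ _).trans (Nat.gcd_dvd_right _ _))

lemma g2_gcd_mod (x : ℕ) : Nat.gcd 120 x = Nat.gcd 120 (x % 120) := by
  rw [Nat.gcd_rec 120 x, Nat.gcd_comm]

lemma g2_gcd120_congr {a b a' b' : ℕ} (ha : a % 120 = a' % 120) (hb : b % 120 = b' % 120) :
    Nat.gcd 120 (Nat.gcd a b) = Nat.gcd 120 (Nat.gcd a' b') := by
  rw [g2_gcd_expand, g2_gcd_expand, g2_gcd_mod a, g2_gcd_mod b, ha, hb,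
    ← g2_gcd_mod a', ← g2_gcd_mod b']

lemma g2_key : ∀ r < 120, Nat.gcd r 60 *
    Nat.gcd 120 (Nat.gcd (60*(r+3)) (18*r^4+135*r^3+400*r^2+585*r+422)) = 120 := by decide

lemma g2_dvd : ∀ r < 120, (r*(18*r^4+135*r^3+400*r^2+585*r+422)) % 120 = 0 := by decide

set_option maxRecDepth 40000 in
/-- Braun's formula `h / gcd(h, 60)` and Douglas's formula
`gcd(h, C(h+2,2) − 1, (h+1)(h+2)(2h+3)(3h+4)(3h+5)/120 − 1)`
for `c(G₂, h)` coincide. -/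
theorem braun_douglas_G2 (h : ℕ) (hpos : 0 < h) :
    h / Nat.gcd h 60 =
      Nat.gcd h (Nat.gcd ((h + 2).choose 2 - 1)
        ((h + 1) * (h + 2) * (2 * h + 3) * (3 * h + 4) * (3 * h + 5) / 120 - 1)) := by
  set Q : ℕ := 18*h^4+135*h^3+400*h^2+585*h+422 with hQdef
  set r : ℕ := h % 120 with hrdef
  have hr : r < 120 := Nat.mod_lt _ (by norm_num)
  have hm : h ≡ r [MOD 120] := (Nat.mod_modEq h 120).symm
  set Qr : ℕ := 18*r^4+135*r^3+400*r^2+585*r+422 with hQrdef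
  have hQcong : Q ≡ Qr [MOD 120] := by
    rw [hQdef, hQrdef]
    exact ((((hm.pow 4).mul_left 18).add ((hm.pow 3).mul_left 135)).add
      ((hm.pow 2).mul_left 400)).add ((hm.mul_left 585).add (Nat.ModEq.refl 422))
  -- rewrite the choose term
  have hA : (h + 2).choose 2 - 1 = h*(h+3)/2 := by
    rw [Nat.choose_two_right]
    have e0 : h + 2 - 1 = h + 1 := by omega
    have e1 : (h+2)*(h+1) = h*(h+3) + 2 := by ring
    rw [e0, e1, Nat.add_div_right _ (by norm_num)]
    omega
  -- rewrite the degree-5 term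
  have hB : (h + 1) * (h + 2) * (2 * h + 3) * (3 * h + 4) * (3 * h + 5) / 120 - 1
      = h*Q/120 := by
    have e1 : (h + 1) * (h + 2) * (2 * h + 3) * (3 * h + 4) * (3 * h + 5) = h*Q + 120 := by
      rw [hQdef]; ring
    rw [e1, Nat.add_div_right _ (by norm_num)]
    omega
  rw [hA, hB]
  -- divisibilities
  have h2 : 2 ∣ h*(h+3) := by
    obtain ⟨k, hk⟩ := Nat.even_mul_succ_self h
    have e : h*(h+3) = h*(h+1) + 2*h := by ring
    exact ⟨k + h, by omega⟩
  have h120 : 120 ∣ h*Q := by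
    have h1 : (h*Q) % 120 = (r*Qr) % 120 := hm.mul hQcong
    have h2 := g2_dvd r hr
    rw [← hQrdef] at h2
    omega
  obtain ⟨k, hk⟩ := h2
  have hk2 : h*(h+3)/2 = k := by omega
  set G : ℕ := Nat.gcd 120 (Nat.gcd (60*(h+3)) Q) with hGdef
  set g : ℕ := Nat.gcd h (Nat.gcd (h*(h+3)/2) (h*Q/120)) with hgdef
  -- main multiplied identity
  have e1 : 120 * (h*(h+3)/2) = h*(60*(h+3)) := by
    have : h*(60*(h+3)) = 60*(h*(h+3)) := by ring
    omega
  have e2 : 120 * (h*Q/120) = h*Q := Nat.mul_div_cancel' h120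
  have hmain : 120 * g = h * G := by
    calc 120 * g
        = Nat.gcd (120*h) (Nat.gcd (120*(h*(h+3)/2)) (120*(h*Q/120))) := by
          rw [Nat.gcd_mul_left, Nat.gcd_mul_left, hgdef]
      _ = Nat.gcd (h*120) (Nat.gcd (h*(60*(h+3))) (h*Q)) := by
          rw [e1, e2, Nat.mul_comm 120 h]
      _ = h * Nat.gcd 120 (Nat.gcd (60*(h+3)) Q) := by
          rw [Nat.gcd_mul_left, Nat.gcd_mul_left]
      _ = h * G := by rw [hGdef]
  -- G and gcd h 60 are determined mod 120
  have hGr : G = Nat.gcd 120 (Nat.gcd (60*(r+3)) Qr) :=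
    g2_gcd120_congr ((hm.add_right 3).mul_left 60) hQcong
  have hd : Nat.gcd h 60 = Nat.gcd r 60 := by
    have h60 : h % 60 = r % 60 := (Nat.mod_mod_of_dvd h (by norm_num)).symm
    rw [Nat.gcd_comm h 60, Nat.gcd_rec 60 h, h60, ← Nat.gcd_rec 60 r, Nat.gcd_comm 60 r]
  have hkey : Nat.gcd h 60 * G = 120 := by
    rw [hd, hGr, hQrdef]; exact g2_key r hr
  have hGpos : 0 < G := by
    rcases Nat.eq_zero_or_pos G with h0 | h0
    · rw [h0] at hkey; omega
    · exact h0
  have hdvdh : g * Nat.gcd h 60 = h := by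
    have e : (g * Nat.gcd h 60) * G = h * G := by
      calc (g * Nat.gcd h 60) * G = (Nat.gcd h 60 * G) * g := by ring
        _ = 120 * g := by rw [hkey]
        _ = h * G := hmain
    exact Nat.eq_of_mul_eq_mul_right hGpos e
  have hdpos : 0 < Nat.gcd h 60 := Nat.gcd_pos_of_pos_right _ (by norm_num)
  exact Nat.div_eq_of_eq_mul_left hdpos hdvdh.symm
end

section
/- If h is a positive integer divisible by 4, then ν_2(h(18h^4 + 135h^3 + 400h^2 + 585h + 422)/120) = ν_2(h) − 2, where the division by 120 is exact. In particular, ν_2 of the numerator h(18h^4 + 135h^3 + 400h^2 + 585h + 422) equals ν_2(h) + 1. -/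
/-- If `4 ∣ h` with `h` positive, then
`ν_2(h(18h⁴ + 135h³ + 400h² + 585h + 422)/120) = ν_2(h) − 2`,
and `ν_2` of the numerator equals `ν_2(h) + 1`. -/
theorem val2_G2_quotient (h : ℕ) (hpos : 0 < h) (hdvd : 4 ∣ h) :
    padicValNat 2
        (h * (18 * h ^ 4 + 135 * h ^ 3 + 400 * h ^ 2 + 585 * h + 422) / 120) =
      padicValNat 2 h - 2 ∧
    padicValNat 2 (h * (18 * h ^ 4 + 135 * h ^ 3 + 400 * h ^ 2 + 585 * h + 422)) =
      padicValNat 2 h + 1 := by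
  obtain ⟨k, rfl⟩ := hdvd
  have hk : 0 < k := by omega
  set Q := 2304*k^4 + 4320*k^3 + 3200*k^2 + 1170*k + 211 with hQ
  have hP : 18 * (4*k) ^ 4 + 135 * (4*k) ^ 3 + 400 * (4*k) ^ 2 + 585 * (4*k) + 422
      = 2 * Q := by rw [hQ]; ring
  have hQodd : ¬ (2 ∣ Q) := by
    obtain ⟨a, ha⟩ : ∃ a, k^4 = a := ⟨_, rfl⟩
    obtain ⟨b, hb⟩ : ∃ b, k^3 = b := ⟨_, rfl⟩
    obtain ⟨c, hc⟩ : ∃ c, k^2 = c := ⟨_, rfl⟩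
    rw [hQ, ha, hb, hc]
    omega
  have hQpos : 0 < Q := by positivity
  have hvQ : padicValNat 2 Q = 0 := padicValNat.eq_zero_of_not_dvd hQodd
  have h15 : (15:ℕ) ∣ 4*k * (18 * (4*k) ^ 4 + 135 * (4*k) ^ 3 + 400 * (4*k) ^ 2 + 585 * (4*k) + 422) := by
    have key : ∀ x : ZMod 15, x*(18*x^4+135*x^3+400*x^2+585*x+422) = 0 := by decide
    have h2 : (((4*k * (18 * (4*k) ^ 4 + 135 * (4*k) ^ 3 + 400 * (4*k) ^ 2 + 585 * (4*k) + 422)) : ℕ) : ZMod 15) = 0 := by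
      push_cast
      exact key _
    exact (ZMod.natCast_eq_zero_iff _ 15).mp h2
  have hnum : 4*k * (18 * (4*k) ^ 4 + 135 * (4*k) ^ 3 + 400 * (4*k) ^ 2 + 585 * (4*k) + 422)
      = 8 * (k * Q) := by rw [hP]; ring
  have h15' : (15:ℕ) ∣ k * Q := by
    rw [hnum] at h15
    exact (Nat.Coprime.dvd_of_dvd_mul_left (by norm_num) h15)
  obtain ⟨t, ht⟩ := h15'
  have htpos : 0 < t := by
    have hkQ : 0 < k * Q := Nat.mul_pos hk hQpos
    obtain ⟨m, hm⟩ : ∃ m, k * Q = m := ⟨_, rfl⟩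
    rw [hm] at ht hkQ
    omega
  haveI : Fact (Nat.Prime 2) := ⟨Nat.prime_two⟩
  have hv4 : padicValNat 2 4 = 2 := by
    simpa using padicValNat.prime_pow (p := 2) 2
  have hv8 : padicValNat 2 8 = 3 := by
    simpa using padicValNat.prime_pow (p := 2) 3
  have hv15 : padicValNat 2 15 = 0 := padicValNat.eq_zero_of_not_dvd (by omega)
  -- valuation of numerator
  have h2Q : padicValNat 2 (2 * Q) = 1 := by
    rw [padicValNat.mul (by omega) (by rw [hQ]; omega), hvQ]
    simp [padicValNat.self]
  have hvnum : padicValNat 2 (4*k * (18 * (4*k) ^ 4 + 135 * (4*k) ^ 3 + 400 * (4*k) ^ 2 + 585 * (4*k) + 422))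
      = padicValNat 2 (4*k) + 1 := by
    rw [padicValNat.mul (by omega) (by omega), hP, h2Q]
  refine ⟨?_, hvnum⟩
  have hnum' : 4*k * (18 * (4*k) ^ 4 + 135 * (4*k) ^ 3 + 400 * (4*k) ^ 2 + 585 * (4*k) + 422)
      = 120 * t := by rw [hnum, ht]; ring
  have hdiv : 4*k * (18 * (4*k) ^ 4 + 135 * (4*k) ^ 3 + 400 * (4*k) ^ 2 + 585 * (4*k) + 422) / 120 = t := by
    rw [hnum']; omega
  rw [hdiv]
  -- ν2 t = ν2 k
  have hvt : padicValNat 2 t = padicValNat 2 k := by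
    have e1 : padicValNat 2 (k * Q) = padicValNat 2 k := by
      rw [padicValNat.mul (by omega) (by omega), hvQ, Nat.add_zero]
    have e2 : padicValNat 2 (15 * t) = padicValNat 2 t := by
      rw [padicValNat.mul (by omega) (by omega), hv15, Nat.zero_add]
    rw [ht, e2] at e1
    omega
  have hv4k : padicValNat 2 (4*k) = 2 + padicValNat 2 k := by
    rw [padicValNat.mul (by omega) (by omega), hv4]
  omega
end
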